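/- A measure η ∈ W₁(ℝ) is a Dirac mass if and only if for every n ∈ ℕ there exist adjacent measures μ_n, ν_n ∈ W₁(ℝ) with d_{W₁}(μ_n,ν_n) = n such that η is either the vertical or the horizontal bisecting measure of μ_n and ν_n. -/

import Mathlib

open MeasureTheory Set

noncomputable section

/-- Cumulative distribution function `F_μ(x) = μ((-∞,x])`. -/
def cdfR (μ : Measure ℝ) (x : ℝ) : ℝ := (μ (Set.Iic x)).toReal

/-- The Wasserstein space `W₁(ℝ)`: Borel probability measures on `ℝ` with finite
first moment. -/
def PR : Set (Measure ℝ) := {μ | IsProbabilityMeasure μ ∧ Integrable (fun x => |x|) μ}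

/-- The 1-Wasserstein distance on `ℝ` via Vallender's formula. -/
def dW1R (μ ν : Measure ℝ) : ℝ := ∫ x, |cdfR μ x - cdfR ν x|

/-- The metric midpoint set of `μ` and `ν` in `W₁(ℝ)`. -/
def Mid (μ ν : Measure ℝ) : Set (Measure ℝ) :=
  {ξ ∈ PR | dW1R μ ξ = dW1R μ ν / 2 ∧ dW1R ξ ν = dW1R μ ν / 2}
/-- `μ` and `ν` are adjacent with witness interval `(a,b)`: their CDFs agree outside
`[a,b)` and both are constant on `[a,b)`. -/
def Adj (μ ν : Measure ℝ) (a b : ℝ) : Prop :=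
  a < b ∧ (∀ x, x ∉ Set.Ico a b → cdfR μ x = cdfR ν x) ∧
    (∀ x ∈ Set.Ico a b, cdfR μ x = cdfR μ a) ∧ (∀ x ∈ Set.Ico a b, cdfR ν x = cdfR ν a)

/-- CDF of the vertical bisecting measure of an adjacent pair: it follows the smaller
constant on the left half `[a, (a+b)/2)` of the flat interval and the larger one on
the right half. -/
def GV (μ ν : Measure ℝ) (a b : ℝ) (x : ℝ) : ℝ :=
  if x < a then cdfR μ x
  else if x < (a + b) / 2 then min (cdfR μ a) (cdfR ν a)
  else if x < b then max (cdfR μ a) (cdfR ν a)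
  else cdfR μ x

/-- CDF of the horizontal bisecting measure of an adjacent pair: it takes the average
of the two constant values on the flat interval `[a,b)`. -/
def GH (μ ν : Measure ℝ) (a b : ℝ) (x : ℝ) : ℝ :=
  if a ≤ x ∧ x < b then (cdfR μ a + cdfR ν a) / 2 else cdfR μ x

lemma cdfR_dirac (s x : ℝ) : cdfR (Measure.dirac s) x = if s ≤ x then 1 else 0 := by
  rw [cdfR, Measure.dirac_apply' _ measurableSet_Iic]
  by_cases h : s ≤ x <;> simp [Set.indicator_apply, Set.mem_Iic, h]

lemma dirac_mem_PR (s : ℝ) : Measure.dirac s ∈ PR := by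
  refine ⟨inferInstance, ?_⟩
  have h : ∀ᵐ x ∂(Measure.dirac s), |x| = |s| := by
    rw [MeasureTheory.ae_dirac_eq]; simp
  exact (integrable_const (|s|)).congr (Filter.EventuallyEq.symm h)

lemma forward (t : ℝ) (n : ℕ) (hn : 0 < n) :
    ∃ μ ∈ PR, ∃ ν ∈ PR, ∃ a b : ℝ, Adj μ ν a b ∧
      dW1R μ ν = n ∧ (∀ x, cdfR (Measure.dirac t) x = GV μ ν a b x) := by
  set a := t - n / 2 with ha
  set b := t + n / 2 with hb
  have hn' : (0:ℝ) < n := by exact_mod_cast hn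
  have hab : a < b := by dsimp [a, b]; linarith
  have hat : a < t := by dsimp [a]; linarith
  have htb : t < b := by dsimp [b]; linarith
  refine ⟨Measure.dirac a, dirac_mem_PR a, Measure.dirac b, dirac_mem_PR b, a, b, ?_, ?_, ?_⟩
  · refine ⟨hab, fun x hx => ?_, fun x hx => ?_, fun x hx => ?_⟩
    · rw [Set.mem_Ico, not_and_or, not_le, not_lt] at hx
      rcases hx with h | h
      · rw [cdfR_dirac, cdfR_dirac, if_neg (by linarith), if_neg (by linarith)]
      · rw [cdfR_dirac, cdfR_dirac, if_pos (by linarith), if_pos (by linarith)]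
    · obtain ⟨h1, h2⟩ := hx
      rw [cdfR_dirac, cdfR_dirac, if_pos h1, if_pos le_rfl]
    · obtain ⟨h1, h2⟩ := hx
      rw [cdfR_dirac, cdfR_dirac, if_neg (by linarith), if_neg (by linarith)]
  · have heq : (fun x => |cdfR (Measure.dirac a) x - cdfR (Measure.dirac b) x|)
        = (Set.Ico a b).indicator (fun _ => (1:ℝ)) := by
      funext x
      rw [cdfR_dirac, cdfR_dirac, Set.indicator_apply]
      by_cases h1 : a ≤ x
      · by_cases h2 : x < b
        · rw [if_pos h1, if_neg (by linarith), if_pos ⟨h1, h2⟩]; norm_num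
        · rw [if_pos h1, if_pos (by linarith), if_neg (fun hc => h2 hc.2)]; norm_num
      · rw [if_neg h1, if_neg (by push_neg at h1; linarith), if_neg (fun hc => h1 hc.1)]
        norm_num
    rw [dW1R, heq, MeasureTheory.integral_indicator measurableSet_Ico]
    simp [Real.volume_Ico, hab.le]
    dsimp [a, b]; ring
  · intro x
    have hmid : (a + b) / 2 = t := by dsimp [a, b]; ring
    rw [GV, hmid, cdfR_dirac, cdfR_dirac, cdfR_dirac, cdfR_dirac,
      if_pos le_rfl, if_neg (not_le.mpr hab)]
    by_cases h1 : x < a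
    · rw [if_pos h1, if_neg (by linarith), if_neg (by linarith : ¬ a ≤ x)]
    · rw [if_neg h1]
      by_cases h2 : x < t
      · rw [if_pos h2, if_neg (not_le.mpr h2)]; norm_num
      · rw [if_neg h2]
        by_cases h3 : x < b
        · rw [if_pos h3, if_pos (not_lt.mp h2)]; norm_num
        · rw [if_neg h3, if_pos (by push_neg at h3; linarith),
            if_pos (by push_neg at h3; linarith : a ≤ x)]

lemma cdfR_nonneg (μ : Measure ℝ) (x : ℝ) : 0 ≤ cdfR μ x := ENNReal.toReal_nonneg

lemma cdfR_le_one (μ : Measure ℝ) [IsProbabilityMeasure μ] (x : ℝ) : cdfR μ x ≤ 1 := by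
  rw [cdfR]
  exact ENNReal.toReal_le_of_le_ofReal zero_le_one (by simpa using prob_le_one)

lemma meas_Iic_eq (η : Measure ℝ) [IsProbabilityMeasure η] (x : ℝ) :
    η (Set.Iic x) = ENNReal.ofReal (cdfR η x) := by
  rw [cdfR, ENNReal.ofReal_toReal (measure_ne_top η _)]

/-- Markov, left tail. -/
lemma markov_left (η : Measure ℝ) [IsProbabilityMeasure η]
    (hInt : Integrable (fun x => |x|) η) {y : ℝ} (hy : y < 0) :
    cdfR η y * (-y) ≤ ∫ x, |x| ∂η := by
  have h1 : cdfR η y * (-y) = ∫ _ in Set.Iic y, (-y) ∂η := by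
    rw [MeasureTheory.setIntegral_const, measureReal_def, cdfR, smul_eq_mul]
  rw [h1]
  have h2 : ∫ _ in Set.Iic y, (-y) ∂η ≤ ∫ x in Set.Iic y, |x| ∂η := by
    refine setIntegral_mono_on (integrableOn_const (measure_ne_top η _))
      hInt.integrableOn measurableSet_Iic (fun x hx => ?_)
    have : x ≤ y := hx
    calc -y ≤ -x := by linarith
    _ ≤ |x| := neg_le_abs x
  exact h2.trans (setIntegral_le_integral hInt
    (Filter.Eventually.of_forall (fun x => abs_nonneg x)))

/-- Markov, right tail. -/
lemma markov_right (η : Measure ℝ) [IsProbabilityMeasure η]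
    (hInt : Integrable (fun x => |x|) η) {y : ℝ} (hy : 0 < y) :
    (1 - cdfR η y) * y ≤ ∫ x, |x| ∂η := by
  have hioi : (η (Set.Ioi y)).toReal = 1 - cdfR η y := by
    have : Set.Ioi y = (Set.Iic y)ᶜ := by simp
    rw [this, measure_compl measurableSet_Iic (measure_ne_top η _), measure_univ,
      ENNReal.toReal_sub_of_le (by simpa using prob_le_one) ENNReal.one_ne_top]
    simp [cdfR]
  have h1 : (1 - cdfR η y) * y = ∫ _ in Set.Ioi y, y ∂η := by
    rw [MeasureTheory.setIntegral_const, measureReal_def, hioi, smul_eq_mul]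
  rw [h1]
  have h2 : ∫ _ in Set.Ioi y, y ∂η ≤ ∫ x in Set.Ioi y, |x| ∂η := by
    refine setIntegral_mono_on (integrableOn_const (measure_ne_top η _))
      hInt.integrableOn measurableSet_Ioi (fun x hx => ?_)
    have : y < x := hx
    calc y ≤ x := this.le
    _ ≤ |x| := le_abs_self x
  exact h2.trans (setIntegral_le_integral hInt
    (Filter.Eventually.of_forall (fun x => abs_nonneg x)))

/-- Dichotomy for a long flat stretch of the CDF. -/
lemma flat_dichotomy (η : Measure ℝ) [IsProbabilityMeasure η]
    (hInt : Integrable (fun x => |x|) η) {u v c : ℝ} (huv : u < v)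
    (hflat : ∀ x ∈ Set.Ico u v, cdfR η x = c) :
    c * ((v - u)/4) ≤ ∫ x, |x| ∂η ∨ (1 - c) * ((v - u)/4) ≤ ∫ x, |x| ∂η := by
  set L := v - u with hL
  have hL0 : 0 < L := by simp [hL]; linarith
  by_cases hu : u ≤ -L/4
  · left
    have hu0 : u < 0 := by linarith
    have hc : cdfR η u = c := hflat u ⟨le_rfl, huv⟩
    have := markov_left η hInt hu0
    rw [hc] at this
    have hnn : 0 ≤ c := by rw [← hc]; exact cdfR_nonneg η u
    nlinarith
  · right
    push_neg at hu
    set y := u + L/2 with hy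
    have hy1 : y ∈ Set.Ico u v := ⟨by simp [hy]; linarith, by simp [hy, hL]; linarith⟩
    have hy0 : 0 < y := by simp [hy]; linarith
    have hc : cdfR η y = c := hflat y hy1
    have := markov_right η hInt hy0
    rw [hc] at this
    have h1c : 0 ≤ 1 - c := by
      rw [← hc]; have := cdfR_le_one η y; linarith
    have hyL : L/4 ≤ y := by simp only [hy]; linarith
    calc (1 - c) * ((v-u)/4) = (1-c) * (L/4) := by rw [hL]
    _ ≤ (1-c) * y := mul_le_mul_of_nonneg_left hyL h1c
    _ ≤ _ := this

/-- If the CDF is flat with value `α` on `[a, m)`, then `η (Iio m) ≤ α`. -/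
lemma measure_Iio_le (η : Measure ℝ) [IsProbabilityMeasure η] {a m α : ℝ} (ham : a < m)
    (hflat : ∀ x ∈ Set.Ico a m, cdfR η x = α) :
    η (Set.Iio m) ≤ ENNReal.ofReal α := by
  have hunion : Set.Iio m = ⋃ k : ℕ, Set.Iic (m - 1/(k+1)) := by
    ext x
    simp only [Set.mem_Iio, Set.mem_iUnion, Set.mem_Iic]
    constructor
    · intro hx
      obtain ⟨k, hk⟩ := exists_nat_one_div_lt (show 0 < m - x by linarith)
      exact ⟨k, by push_cast at hk ⊢; linarith⟩
    · rintro ⟨k, hk⟩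
      have : 0 < 1/((k:ℝ)+1) := by positivity
      linarith
  have hdir : Directed (· ⊆ ·) (fun k : ℕ => Set.Iic (m - 1/(k+1))) := by
    intro i j
    rcases le_total i j with h | h
    · exact ⟨j, Set.Iic_subset_Iic.2 (by
        have : 1/((j:ℝ)+1) ≤ 1/((i:ℝ)+1) := by
          apply one_div_le_one_div_of_le (by positivity); push_cast; exact_mod_cast by linarith
        linarith), Set.Subset.rfl⟩
    · exact ⟨i, Set.Subset.rfl, Set.Iic_subset_Iic.2 (by
        have : 1/((i:ℝ)+1) ≤ 1/((j:ℝ)+1) := by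
          apply one_div_le_one_div_of_le (by positivity); push_cast; exact_mod_cast by linarith
        linarith)⟩
  rw [hunion, hdir.measure_iUnion]
  refine iSup_le fun k => ?_
  set z := max a (m - 1/(k+1)) with hz
  have hzlt : z < m := by
    rw [hz, max_lt_iff]
    constructor
    · exact ham
    · have : 0 < 1/((k:ℝ)+1) := by positivity
      linarith
  have hmono : η (Set.Iic (m - 1/(k+1))) ≤ η (Set.Iic z) :=
    measure_mono (Set.Iic_subset_Iic.2 (le_max_right _ _))
  have : η (Set.Iic z) = ENNReal.ofReal α := by
    rw [meas_Iic_eq, hflat z ⟨le_max_left _ _, hzlt⟩]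
  exact this ▸ hmono

/-- Mass of a singleton from a jump of the CDF. -/
lemma singleton_mass (η : Measure ℝ) [IsProbabilityMeasure η] {a m α : ℝ} (ham : a < m)
    (hflat : ∀ x ∈ Set.Ico a m, cdfR η x = α) :
    cdfR η m - α ≤ (η {m}).toReal := by
  have hsplit : Set.Iic m = Set.Iio m ∪ {m} := by
    ext x; simp [Set.mem_Iio, le_iff_lt_or_eq]
  have hdisj : Disjoint (Set.Iio m) ({m} : Set ℝ) := by
    simp [Set.disjoint_singleton_right]
  have hadd : η (Set.Iic m) = η (Set.Iio m) + η {m} := by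
    rw [hsplit, measure_union hdisj (measurableSet_singleton m)]
  have h1 : cdfR η m = (η (Set.Iio m)).toReal + (η {m}).toReal := by
    rw [cdfR, hadd, ENNReal.toReal_add (measure_ne_top η _) (measure_ne_top η _)]
  have h2 : (η (Set.Iio m)).toReal ≤ α := by
    have := measure_Iio_le η ham hflat
    have h3 := ENNReal.toReal_mono (by simp) this
    have hα : 0 ≤ α := by
      rw [← hflat a ⟨le_rfl, ham⟩]; exact cdfR_nonneg η a
    rwa [ENNReal.toReal_ofReal hα] at h3
  linarith

/-- A probability measure with an atom of full mass is a Dirac mass. -/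
lemma eq_dirac_of_full_atom (η : Measure ℝ) [IsProbabilityMeasure η] {t : ℝ}
    (ht : η {t} = 1) : η = Measure.dirac t := by
  ext s hs
  rw [Measure.dirac_apply' _ hs]
  have hcompl : η ({t}ᶜ) = 0 := by
    rw [measure_compl (measurableSet_singleton t) (measure_ne_top η _), measure_univ, ht]
    simp
  by_cases hts : t ∈ s
  · have h1 : η s ≤ 1 := prob_le_one
    have h2 : (1:ENNReal) ≤ η s := by
      rw [← ht]; exact measure_mono (Set.singleton_subset_iff.2 hts)
    simp [Set.indicator_apply, hts, le_antisymm h1 h2]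
  · have hsub : s ⊆ ({t} : Set ℝ)ᶜ := fun x hx => by
      simp only [Set.mem_compl_iff, Set.mem_singleton_iff]
      rintro rfl; exact hts hx
    have h0 := measure_mono_null hsub hcompl
    simp [Set.indicator_apply, hts, h0]

lemma dW1_adj (μ ν : Measure ℝ) {a b : ℝ} (hadj : Adj μ ν a b) :
    dW1R μ ν = |cdfR μ a - cdfR ν a| * (b - a) := by
  obtain ⟨hab, h2, h3, h4⟩ := hadj
  have heq : (fun x => |cdfR μ x - cdfR ν x|)
      = (Set.Ico a b).indicator (fun _ => |cdfR μ a - cdfR ν a|) := by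
    funext x
    by_cases hx : x ∈ Set.Ico a b
    · rw [Set.indicator_of_mem hx, h3 x hx, h4 x hx]
    · rw [Set.indicator_of_notMem hx, h2 x hx, sub_self, abs_zero]
  rw [dW1R, heq, MeasureTheory.integral_indicator measurableSet_Ico,
    MeasureTheory.setIntegral_const, measureReal_def, Real.volume_Ico, smul_eq_mul,
    ENNReal.toReal_ofReal (by linarith)]
  ring

set_option maxHeartbeats 1000000 in
/-- Key step: for `n` larger than eight times the first moment, the bisecting
structure forces an atom of mass at least `1 - 16 C / n`. -/
lemma key (η : Measure ℝ) [IsProbabilityMeasure η] (hInt : Integrable (fun x => |x|) η)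
    (n : ℕ) (hn8 : 8 * (∫ x, |x| ∂η) < n)
    (hex : ∃ μ ∈ PR, ∃ ν ∈ PR, ∃ a b : ℝ, Adj μ ν a b ∧ dW1R μ ν = n ∧
      ((∀ x, cdfR η x = GV μ ν a b x) ∨ (∀ x, cdfR η x = GH μ ν a b x))) :
    ∃ m : ℝ, 1 - 16 * (∫ x, |x| ∂η) / n ≤ (η {m}).toReal := by
  set C := ∫ x, |x| ∂η with hCdef
  have hC0 : 0 ≤ C := integral_nonneg (fun x => abs_nonneg x)
  have hn0 : (0:ℝ) < n := lt_of_le_of_lt (by linarith) hn8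
  obtain ⟨μ, hμ, ν, hν, a, b, hadj, hdist, hcase⟩ := hex
  haveI : IsProbabilityMeasure μ := hμ.1
  haveI : IsProbabilityMeasure ν := hν.1
  have hab : a < b := hadj.1
  set α₀ := cdfR μ a with hα₀
  set β₀ := cdfR ν a with hβ₀
  have hα01 : 0 ≤ α₀ ∧ α₀ ≤ 1 := ⟨cdfR_nonneg μ a, cdfR_le_one μ a⟩
  have hβ01 : 0 ≤ β₀ ∧ β₀ ≤ 1 := ⟨cdfR_nonneg ν a, cdfR_le_one ν a⟩
  set δ := |α₀ - β₀| with hδdef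
  have hdW : δ * (b - a) = n := by
    rw [← hdist, dW1_adj μ ν hadj]
  have hδ0 : 0 ≤ δ := abs_nonneg _
  have hδ1 : δ ≤ 1 := abs_sub_le_iff.2 ⟨by linarith [hα01.2, hβ01.1], by linarith [hβ01.2, hα01.1]⟩
  have hδpos : 0 < δ := by
    rcases lt_or_eq_of_le hδ0 with h | h
    · exact h
    · exfalso; rw [← h, zero_mul] at hdW; linarith
  have hba : n ≤ b - a := by nlinarith
  rcases hcase with hF | hF
  · -- vertical case
    set m := (a + b) / 2 with hm
    have ham : a < m := by rw [hm]; linarith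
    have hmb : m < b := by rw [hm]; linarith
    set αm := min α₀ β₀ with hαm
    set βm := max α₀ β₀ with hβm
    have hδ' : βm - αm = δ := (max_sub_min_eq_abs α₀ β₀).trans (abs_sub_comm β₀ α₀)
    have flat1 : ∀ x ∈ Set.Ico a m, cdfR η x = αm := by
      intro x hx
      rw [hF x, GV, if_neg (not_lt.2 hx.1), if_pos hx.2]
    have flat2 : ∀ x ∈ Set.Ico m b, cdfR η x = βm := by
      intro x hx
      rw [hF x, GV, if_neg (not_lt.2 (le_trans ham.le hx.1)), if_neg (not_lt.2 hx.1),
        if_pos hx.2]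
    have d1 := flat_dichotomy η hInt ham flat1
    have d2 := flat_dichotomy η hInt hmb flat2
    have hLa : m - a = (b - a) / 2 := by rw [hm]; ring
    have hLb : b - m = (b - a) / 2 := by rw [hm]; ring
    have hαmβm : αm ≤ 1 ∧ 0 ≤ αm ∧ βm ≤ 1 ∧ 0 ≤ βm := by
      constructor
      · exact le_trans (min_le_left _ _) hα01.2
      exact ⟨le_min hα01.1 hβ01.1, max_le hα01.2 hβ01.2, le_trans hα01.1 (le_max_left _ _)⟩
    have hd1 : αm * ((b - a) / 2 / 4) ≤ C := by
      rcases d1 with h | h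
      · rwa [hLa] at h
      · exfalso
        rw [hLa] at h
        have hstep : δ * ((b - a) / 2 / 4) ≤ (1 - αm) * ((b - a) / 2 / 4) := by
          apply mul_le_mul_of_nonneg_right _ (by linarith)
          linarith [hαmβm.2.2.1]
        nlinarith
    have hd2 : (1 - βm) * ((b - a) / 2 / 4) ≤ C := by
      rcases d2 with h | h
      · exfalso
        rw [hLb] at h
        have hstep : δ * ((b - a) / 2 / 4) ≤ βm * ((b - a) / 2 / 4) := by
          apply mul_le_mul_of_nonneg_right _ (by linarith)
          linarith [hαmβm.2.1]
        nlinarith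
      · rwa [hLb] at h
    -- bounds : αm ≤ 8C/n, 1 - βm ≤ 8C/n
    have hbnd1 : αm * n ≤ 8 * C := by nlinarith [hαmβm.2.1]
    have hbnd2 : (1 - βm) * n ≤ 8 * C := by nlinarith [hαmβm.2.2.1]
    have hcm : cdfR η m = βm := by
      rw [hF m, GV, if_neg (not_lt.2 ham.le), if_neg (lt_irrefl m), if_pos hmb]
    have hmass := singleton_mass η ham flat1
    rw [hcm] at hmass
    refine ⟨m, ?_⟩
    have h1 : αm ≤ 8 * C / n := by rw [le_div_iff₀ hn0]; linarith
    have h2 : 1 - βm ≤ 8 * C / n := by rw [le_div_iff₀ hn0]; linarith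
    have : 1 - 16 * C / n ≤ βm - αm := by
      have : 16 * C / n = 8 * C / n + 8 * C / n := by ring
      rw [this]; linarith
    linarith
  · -- horizontal case : impossible
    exfalso
    set c := (α₀ + β₀) / 2 with hc
    have flat : ∀ x ∈ Set.Ico a b, cdfR η x = c := by
      intro x hx
      rw [hF x, GH, if_pos ⟨hx.1, hx.2⟩]
    have hc1 : δ / 2 ≤ c := by
      rw [hc]
      have : δ ≤ α₀ + β₀ :=
        abs_sub_le_iff.2 ⟨by linarith [hβ01.1], by linarith [hα01.1]⟩
      linarith
    have hc2 : δ / 2 ≤ 1 - c := by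
      rw [hc]
      have : δ ≤ 2 - α₀ - β₀ :=
        abs_sub_le_iff.2 ⟨by linarith [hα01.2, hβ01.2], by linarith [hα01.2, hβ01.2]⟩
      linarith
    have hd := flat_dichotomy η hInt hab flat
    have hkey : δ * (b - a) ≤ 8 * C := by
      rcases hd with h | h
      · have hstep := mul_le_mul_of_nonneg_right hc1 (by linarith : (0:ℝ) ≤ (b-a)/4)
        have e : δ * (b - a) = 8 * (δ/2 * ((b-a)/4)) := by ring
        rw [e]; linarith
      · have hstep := mul_le_mul_of_nonneg_right hc2 (by linarith : (0:ℝ) ≤ (b-a)/4)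
        have e : δ * (b - a) = 8 * (δ/2 * ((b-a)/4)) := by ring
        rw [e]; linarith
    rw [hdW] at hkey
    linarith

lemma reverse (η : Measure ℝ) (hη : η ∈ PR)
    (H : ∀ n : ℕ, 0 < n → ∃ μ ∈ PR, ∃ ν ∈ PR, ∃ a b : ℝ, Adj μ ν a b ∧
      dW1R μ ν = n ∧
      ((∀ x, cdfR η x = GV μ ν a b x) ∨ (∀ x, cdfR η x = GH μ ν a b x))) :
    ∃ t : ℝ, η = Measure.dirac t := by
  haveI : IsProbabilityMeasure η := hη.1
  have hInt := hη.2
  set C := ∫ x, |x| ∂η with hCdef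
  have hC0 : 0 ≤ C := integral_nonneg (fun x => abs_nonneg x)
  have key' : ∀ n : ℕ, 8 * C < n → ∃ m : ℝ, 1 - 16 * C / n ≤ (η {m}).toReal := by
    intro n hn
    have hn0 : 0 < n := by
      by_contra h
      push_neg at h
      interval_cases n
      · simp at hn; linarith
    exact key η hInt n hn (H n hn0)
  set n₀ : ℕ := ⌈32 * C⌉₊ + 1 with hn₀def
  have hn₀C : 32 * C < n₀ := by
    calc 32 * C ≤ (⌈32 * C⌉₊ : ℝ) := Nat.le_ceil _
    _ < n₀ := by rw [hn₀def]; push_cast; linarith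
  have hn₀8 : 8 * C < n₀ := by linarith
  have hn₀pos : (0:ℝ) < n₀ := by linarith
  obtain ⟨t, ht⟩ := key' n₀ hn₀8
  have half₀ : 16 * C / n₀ < 1/2 := by
    rw [div_lt_iff₀ hn₀pos]; linarith
  have ht2 : 1/2 < (η {t}).toReal := by linarith
  -- the atom at t has full mass
  have htfull : (η {t}).toReal = 1 := by
    by_contra hne
    have htle : (η {t}).toReal ≤ 1 := by
      rw [← ENNReal.toReal_one]
      exact ENNReal.toReal_mono ENNReal.one_ne_top prob_le_one
    have hlt : (η {t}).toReal < 1 := lt_of_le_of_ne htle hne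
    set ε := 1 - (η {t}).toReal with hε
    have hε0 : 0 < ε := by linarith
    set n : ℕ := n₀ + ⌈16 * C / ε⌉₊ + 1 with hn
    have hnn₀' : n₀ ≤ n := by rw [hn]; omega
    have hnn₀ : (n₀:ℝ) ≤ n := by exact_mod_cast hnn₀'
    have hnpos : (0:ℝ) < n := lt_of_lt_of_le hn₀pos hnn₀
    have hn8 : 8 * C < n := by linarith
    obtain ⟨m, hm⟩ := key' n hn8
    have hdivle : 16 * C / n ≤ 16 * C / n₀ :=
      div_le_div_of_nonneg_left (by linarith) hn₀pos hnn₀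
    have hm2 : 1/2 < (η {m}).toReal := by linarith
    have hmt : m = t := by
      by_contra hmt
      have hdisj : Disjoint ({m} : Set ℝ) {t} := by
        simp [Set.disjoint_singleton, hmt]
      have hsum : η {m} + η {t} ≤ 1 := by
        rw [← measure_union hdisj (measurableSet_singleton t)]
        exact prob_le_one
      have := ENNReal.toReal_mono ENNReal.one_ne_top hsum
      rw [ENNReal.toReal_add (measure_ne_top η _) (measure_ne_top η _),
        ENNReal.toReal_one] at this
      linarith
    rw [hmt] at hm
    have hceilN : ⌈16 * C / ε⌉₊ < n := by rw [hn]; omega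
    have hceil : 16 * C / ε < n :=
      lt_of_le_of_lt (Nat.le_ceil _) (by exact_mod_cast hceilN)
    have hdiv : 16 * C / n < ε := by
      rw [div_lt_iff₀ hnpos]
      rw [div_lt_iff₀ hε0] at hceil
      linarith
    have : 1 - ε < (η {t}).toReal := by linarith
    rw [hε] at this
    linarith
  have ht1 : η {t} = 1 := (ENNReal.toReal_eq_one_iff _).1 htfull
  exact ⟨t, eq_dirac_of_full_atom η ht1⟩

/-- A measure `η ∈ W₁(ℝ)` is a Dirac mass iff for every `n ≥ 1` there are adjacent
measures `μₙ, νₙ ∈ W₁(ℝ)` at distance `n` such that `η` is their vertical or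
horizontal bisecting measure. -/
theorem dirac_characterization (η : Measure ℝ) (hη : η ∈ PR) :
    (∃ t : ℝ, η = Measure.dirac t) ↔
      ∀ n : ℕ, 0 < n → ∃ μ ∈ PR, ∃ ν ∈ PR, ∃ a b : ℝ, Adj μ ν a b ∧
        dW1R μ ν = n ∧
        ((∀ x, cdfR η x = GV μ ν a b x) ∨ (∀ x, cdfR η x = GH μ ν a b x)) := by
  constructor
  · rintro ⟨t, rfl⟩ n hn
    obtain ⟨μ, hμ, ν, hν, a, b, hadj, hdist, hGV⟩ := forward t n hn
    exact ⟨μ, hμ, ν, hν, a, b, hadj, hdist, Or.inl hGV⟩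
  · exact reverse η hη
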